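/- Let G be a finite weighted graph on n vertices in which every out-degree in any fractional orientation is at most n, and let g be an η-fair fractional orientation with η ≤ ε²/(128 log n) for some 0 < ε ≤ 1. Then for every vertex v, the out-degree satisfies (1+ε)^{-1} g*(v) ≤ g(v) ≤ (1+ε) g*(v), where g*(v) is the out-degree of v in any locally fair fractional orientation of G. -/

import Mathlib

open Finset Real

noncomputable section

variable {V : Type*}

/-- The out-degree of `u` in a fractional orientation `o`. -/
def outdeg [Fintype V] (o : V → V → ℝ) (u : V) : ℝ := ∑ x : V, o u x

/-- `o` is a fractional orientation of the weighted graph `(G, w)`: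
nonnegative values on directed edge-halves, supported on edges, summing to the edge weight. -/
def IsOrientation [Fintype V] (G : SimpleGraph V) (w : V → V → ℝ) (o : V → V → ℝ) : Prop :=
  (∀ u v, 0 ≤ o u v) ∧ (∀ u v, ¬ G.Adj u v → o u v = 0) ∧
    (∀ u v, G.Adj u v → o u v + o v u = w u v)

/-- A fractional orientation is locally fair if positive weight on `u → v`
implies `g(u) ≤ g(v)`. -/
def LocallyFair [Fintype V] (o : V → V → ℝ) : Prop :=
  ∀ u v, 0 < o u v → outdeg o u ≤ outdeg o v

/-- A fractional orientation is `η`-fair if positive weight on `u → v`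
implies `g(u) ≤ (1+η)·g(v)`. -/
def EtaFair [Fintype V] (η : ℝ) (o : V → V → ℝ) : Prop :=
  ∀ u v, 0 < o u v → outdeg o u ≤ (1 + η) * outdeg o v

/-- Total weight of edges of `G` inside the vertex set `S`. -/
def edgeWeight [Fintype V] (G : SimpleGraph V) [DecidableRel G.Adj] (w : V → V → ℝ)
    (S : Finset V) : ℝ :=
  (∑ u ∈ S, ∑ v ∈ S, if G.Adj u v then w u v else 0) / 2

/-- Density of the subgraph induced on `S`. -/
def densityOn [Fintype V] (G : SimpleGraph V) [DecidableRel G.Adj] (w : V → V → ℝ)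
    (S : Finset V) : ℝ :=
  edgeWeight G w S / S.card


section MyAux

set_option linter.unusedSectionVars false
set_option linter.unusedVariables false

lemma my_chain_absurd (δ C : ℝ) (hδ : 0 < δ) (a : ℕ → ℝ) (K : ℕ) (h0 : 1 ≤ a 0)
    (hstep : ∀ j < K, (1 + δ) * a j ≤ a (j + 1)) (hb : ∀ j, a j ≤ C)
    (hK : C < (1 + δ) ^ K) : False := by
  have grow : ∀ j ≤ K, (1 + δ) ^ j ≤ a j := by
    intro j
    induction j with
    | zero => intro _; simpa using h0
    | succ k ih =>
      intro hk
      have hk' : k < K := Nat.lt_of_succ_le hk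
      calc (1 + δ) ^ (k + 1) = (1 + δ) * (1 + δ) ^ k := by ring
        _ ≤ (1 + δ) * a k := by
            have := ih (le_of_lt hk')
            nlinarith
        _ ≤ a (k + 1) := hstep k hk'
  have := grow K le_rfl
  have := hb K
  linarith

-- log x ≥ 1 - 1/x for x > 0
lemma my_log_ge (x : ℝ) (hx : 0 < x) : 1 - 1 / x ≤ Real.log x := by
  have h := Real.log_le_sub_one_of_pos (show (0:ℝ) < 1 / x by positivity)
  rw [Real.log_div one_ne_zero (ne_of_gt hx), Real.log_one] at h
  have : 1 / x - 1 ≥ 0 - Real.log x := by linarith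
  linarith

lemma my_F1 (ε η' : ℝ) (hε : 0 < ε) (hε1 : ε ≤ 1) (hη'0 : 0 ≤ η') (K : ℕ)
    (hKη : (K : ℝ) * η' ≤ ε / 4) :
    ∀ j ≤ K, (1 + η') ^ j ≤ (1 + ε) / (1 + ε / 2) := by
  intro j hj
  have h1 : (0:ℝ) < 1 + η' := by linarith
  have hmono : (1 + η') ^ j ≤ (1 + η') ^ K :=
    pow_le_pow_right₀ (by linarith) hj
  refine le_trans hmono ?_
  have hratio : (0:ℝ) < (1 + ε) / (1 + ε / 2) := by positivity
  rw [← Real.log_le_log_iff (by positivity) hratio, Real.log_pow]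
  have hlog1 : Real.log (1 + η') ≤ η' := by
    have := Real.log_le_sub_one_of_pos h1
    linarith
  have hlog2 : ε / 4 ≤ Real.log ((1 + ε) / (1 + ε / 2)) := by
    have h2 := my_log_ge ((1 + ε) / (1 + ε / 2)) hratio
    have he : 1 - 1 / ((1 + ε) / (1 + ε / 2)) = (ε / 2) / (1 + ε) := by
      rw [one_div_div]
      field_simp
      ring
    rw [he] at h2
    have : ε / 4 ≤ (ε / 2) / (1 + ε) := by
      rw [div_le_div_iff₀ (by norm_num) (by linarith)]
      nlinarith
    linarith
  calc (K : ℝ) * Real.log (1 + η') ≤ (K : ℝ) * η' := by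
        have : (0:ℝ) ≤ (K : ℝ) := Nat.cast_nonneg K
        nlinarith
    _ ≤ ε / 4 := hKη
    _ ≤ Real.log ((1 + ε) / (1 + ε / 2)) := hlog2

lemma my_F2 (ε : ℝ) (hε : 0 < ε) (hε1 : ε ≤ 1) (n : ℕ) (hn1 : 1 ≤ n)
    (K : ℕ) (hKbig : 6 * Real.log n / ε + 1 ≤ (K : ℝ)) :
    (n : ℝ) < (1 + ε / 4) ^ K := by
  have hn0 : (0:ℝ) < (n:ℝ) := by exact_mod_cast hn1
  have hL0 : 0 ≤ Real.log n := Real.log_nonneg (by exact_mod_cast hn1)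
  have hb : (0:ℝ) < 1 + ε / 4 := by linarith
  rw [← Real.log_lt_log_iff hn0 (by positivity), Real.log_pow]
  have hlog : ε / 5 ≤ Real.log (1 + ε / 4) := by
    have h2 := my_log_ge (1 + ε / 4) hb
    have : ε / 5 ≤ 1 - 1 / (1 + ε / 4) := by
      rw [show (1:ℝ) - 1 / (1 + ε/4) = (ε/4)/(1 + ε/4) by field_simp; ring]
      rw [div_le_div_iff₀ (by norm_num) (by linarith)]
      nlinarith
    linarith
  have hK0 : (0:ℝ) ≤ (K:ℝ) := Nat.cast_nonneg K
  calc Real.log n < (6 * Real.log n / ε + 1) * (ε / 5) := by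
        rw [add_mul]
        have : 6 * Real.log n / ε * (ε / 5) = 6 * Real.log n / 5 := by
          field_simp
        rw [this]
        nlinarith
    _ ≤ (K : ℝ) * (ε / 5) := by nlinarith
    _ ≤ (K : ℝ) * Real.log (1 + ε / 4) := by nlinarith


lemma my_Keta (ε η L : ℝ) (hε : 0 < ε) (hε1 : ε ≤ 1) (hL0 : 0 ≤ L)
    (hL2 : 0 < L → Real.log 2 ≤ L) (hη : η ≤ ε ^ 2 / (128 * L)) :
    ((⌈6 * L / ε⌉₊ + 1 : ℕ) : ℝ) * max η 0 ≤ ε / 4 := by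
  by_cases hc : η ≤ 0
  · rw [max_eq_right hc, mul_zero]
    positivity
  push_neg at hc
  rw [max_eq_left (le_of_lt hc)]
  have hLpos : 0 < L := by
    rcases lt_or_eq_of_le hL0 with h | h
    · exact h
    · exfalso
      rw [← h] at hη
      simp at hη
      linarith
  have hLhalf : (1:ℝ) / 2 ≤ L := by
    have := hL2 hLpos
    have h2 := Real.log_two_gt_d9
    linarith
  set Kr : ℝ := ((⌈6 * L / ε⌉₊ + 1 : ℕ) : ℝ) with hKr
  have hKrge : 0 ≤ Kr := Nat.cast_nonneg _
  have hKrle : Kr ≤ 6 * L / ε + 2 := by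
    have h1 : (⌈6 * L / ε⌉₊ : ℝ) < 6 * L / ε + 1 :=
      Nat.ceil_lt_add_one (by positivity)
    have : Kr = (⌈6 * L / ε⌉₊ : ℝ) + 1 := by
      rw [hKr]; push_cast; ring
    linarith
  have hA : Kr * ε ≤ 6 * L + 2 * ε := by
    have := mul_le_mul_of_nonneg_right hKrle (le_of_lt hε)
    rw [add_mul, div_mul_cancel₀] at this
    · linarith
    · exact ne_of_gt hε
  have hB : 128 * L * η ≤ ε ^ 2 := by
    have h := mul_le_mul_of_nonneg_left hη (by positivity : (0:ℝ) ≤ 128 * L)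
    have he : 128 * L * (ε ^ 2 / (128 * L)) = ε ^ 2 := by field_simp
    linarith
  have hC : 64 * η ≤ ε ^ 2 := by nlinarith
  -- goal : Kr * η ≤ ε / 4
  have key : Kr * η * ε ≤ (ε / 4) * ε := by
    have h1 : Kr * η * ε = (Kr * ε) * η := by ring
    rw [h1]
    calc (Kr * ε) * η ≤ (6 * L + 2 * ε) * η := by nlinarith
      _ = 6 * L * η + 2 * ε * η := by ring
      _ ≤ (3/64) * ε ^ 2 + 2 * ε * η := by nlinarith
      _ ≤ (3/64) * ε ^ 2 + (1/32) * ε ^ 2 := by nlinarith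
      _ ≤ (ε / 4) * ε := by nlinarith
  have := mul_le_mul_of_nonneg_right (le_refl (ε/4)) (le_of_lt hε)
  nlinarith


variable [Fintype V] [DecidableEq V] {G : SimpleGraph V} {w : V → V → ℝ}

lemma my_outdeg_nonneg {o : V → V → ℝ} (ho : IsOrientation G w o) (u : V) :
    0 ≤ outdeg o u :=
  Finset.sum_nonneg fun x _ => ho.1 u x

lemma my_key {p q : V → V → ℝ} (hp : IsOrientation G w p) (hq : IsOrientation G w q)
    (u x : V) : p u x - q u x = q x u - p x u := by
  by_cases h : G.Adj u x
  · have h' : G.Adj x u := h.symm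
    have e1 := hp.2.2 u x h
    have e2 := hq.2.2 u x h
    linarith
  · have h' : ¬ G.Adj x u := fun a => h a.symm
    rw [hp.2.1 u x h, hq.2.1 u x h, hp.2.1 x u h', hq.2.1 x u h']

lemma my_master {p q : V → V → ℝ} (hp : IsOrientation G w p) (hq : IsOrientation G w q)
    (A A' : Finset V)
    (H : ∀ u ∈ A, ∀ x, x ∉ A → 0 < p u x → 0 < q x u → x ∈ A') :
    ∑ u ∈ A, (outdeg p u - outdeg q u) ≤ ∑ x ∈ A' \ A, outdeg q x := by
  classical
  have key := my_key hp hq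
  have step1 : ∑ u ∈ A, (outdeg p u - outdeg q u)
      = ∑ u ∈ A, ∑ x : V, (q x u - p x u) := by
    refine Finset.sum_congr rfl fun u _ => ?_
    rw [outdeg, outdeg, ← Finset.sum_sub_distrib]
    exact Finset.sum_congr rfl fun x _ => key u x
  have split : ∀ u : V, ∑ x : V, (q x u - p x u)
      = ∑ x ∈ A, (q x u - p x u) + ∑ x ∈ Finset.univ \ A, (q x u - p x u) := by
    intro u
    rw [add_comm, Finset.sum_sdiff (Finset.subset_univ A)]
  have cancel : ∑ u ∈ A, ∑ x ∈ A, (q x u - p x u) = 0 := by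
    have hs : ∑ u ∈ A, ∑ x ∈ A, (q x u - p x u)
        = - ∑ u ∈ A, ∑ x ∈ A, (q x u - p x u) := by
      calc ∑ u ∈ A, ∑ x ∈ A, (q x u - p x u)
          = ∑ u ∈ A, ∑ x ∈ A, (p u x - q u x) := by
            exact Finset.sum_congr rfl fun u _ => Finset.sum_congr rfl fun x _ => (key u x).symm
        _ = ∑ x ∈ A, ∑ u ∈ A, (p u x - q u x) := Finset.sum_comm
        _ = ∑ x ∈ A, -(∑ u ∈ A, (q u x - p u x)) := by
            refine Finset.sum_congr rfl fun x _ => ?_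
            rw [← Finset.sum_neg_distrib]
            exact Finset.sum_congr rfl fun u _ => by ring
        _ = - ∑ x ∈ A, ∑ u ∈ A, (q u x - p u x) := by rw [Finset.sum_neg_distrib]
    linarith
  have bound : ∑ u ∈ A, ∑ x ∈ Finset.univ \ A, (q x u - p x u)
      ≤ ∑ x ∈ A' \ A, outdeg q x := by
    have pt : ∀ u ∈ A, ∀ x ∈ Finset.univ \ A,
        (q x u - p x u) ≤ (if x ∈ A' \ A then q x u else 0) := by
      intro u hu x hx
      rw [Finset.mem_sdiff] at hx
      by_cases hx' : x ∈ A' \ A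
      · rw [if_pos hx']
        have := hp.1 x u
        linarith
      · rw [if_neg hx']
        by_contra hc
        push_neg at hc
        have hqpos : 0 < q x u := lt_of_le_of_lt (hp.1 x u) (by linarith)
        have hppos : 0 < p u x := by
          have hk := key u x
          have := hq.1 u x
          linarith
        exact hx' (Finset.mem_sdiff.2 ⟨H u hu x hx.2 hppos hqpos, hx.2⟩)
    calc ∑ u ∈ A, ∑ x ∈ Finset.univ \ A, (q x u - p x u)
        ≤ ∑ u ∈ A, ∑ x ∈ Finset.univ \ A, (if x ∈ A' \ A then q x u else 0) := by
          exact Finset.sum_le_sum fun u hu => Finset.sum_le_sum (pt u hu)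
      _ = ∑ x ∈ Finset.univ \ A, ∑ u ∈ A, (if x ∈ A' \ A then q x u else 0) :=
          Finset.sum_comm
      _ = ∑ x ∈ Finset.univ \ A, (if x ∈ A' \ A then ∑ u ∈ A, q x u else 0) := by
          refine Finset.sum_congr rfl fun x _ => ?_
          by_cases hx : x ∈ A' \ A <;> simp [hx]
      _ = ∑ x ∈ (Finset.univ \ A).filter (fun x => x ∈ A' \ A), ∑ u ∈ A, q x u := by
          rw [Finset.sum_filter]
      _ = ∑ x ∈ A' \ A, ∑ u ∈ A, q x u := by
          congr 1
          ext x
          simp only [Finset.mem_filter, Finset.mem_sdiff, Finset.mem_univ, true_and]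
          tauto
      _ ≤ ∑ x ∈ A' \ A, outdeg q x := by
          refine Finset.sum_le_sum fun x _ => ?_
          exact Finset.sum_le_sum_of_subset_of_nonneg (Finset.subset_univ A)
            (fun i _ _ => hq.1 x i)
  calc ∑ u ∈ A, (outdeg p u - outdeg q u)
      = ∑ u ∈ A, ∑ x : V, (q x u - p x u) := step1
    _ = ∑ u ∈ A, ∑ x ∈ A, (q x u - p x u)
        + ∑ u ∈ A, ∑ x ∈ Finset.univ \ A, (q x u - p x u) := by
        rw [← Finset.sum_add_distrib]
        exact Finset.sum_congr rfl fun u _ => split u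
    _ = ∑ u ∈ A, ∑ x ∈ Finset.univ \ A, (q x u - p x u) := by rw [cancel, zero_add]
    _ ≤ ∑ x ∈ A' \ A, outdeg q x := bound


lemma my_upper {ostar o : V → V → ℝ}
    (hostar : IsOrientation G w ostar) (ho : IsOrientation G w o)
    (hfair : LocallyFair ostar) {ε η' : ℝ} (hε : 0 < ε) (hε1 : ε ≤ 1) (hη'0 : 0 ≤ η')
    (hfair' : EtaFair η' o) (K : ℕ)
    (hF1 : ∀ j ≤ K, (1 + η') ^ j ≤ (1 + ε) / (1 + ε / 2))
    (hF2 : (Fintype.card V : ℝ) < (1 + ε / 4) ^ K)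
    (v : V) : outdeg o v ≤ (1 + ε) * outdeg ostar v := by
  by_contra hcon
  push_neg at hcon
  set ρ := outdeg ostar v with hρdef
  have hρ0 : 0 ≤ ρ := my_outdeg_nonneg hostar v
  have hgv : 0 < outdeg o v := lt_of_le_of_lt (by nlinarith) hcon
  set A : ℕ → Finset V := fun j => Finset.univ.filter
      (fun u => outdeg ostar u ≤ ρ ∧ outdeg o v ≤ outdeg o u * (1 + η') ^ j) with hA
  have hpow : ∀ j : ℕ, (0:ℝ) < (1 + η') ^ j := fun j => pow_pos (by linarith) j
  have hpow1 : ∀ j : ℕ, (1:ℝ) ≤ (1 + η') ^ j :=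
    fun j => one_le_pow₀ (by linarith)
  have hvA : ∀ j, v ∈ A j := by
    intro j
    rw [hA]
    simp only [Finset.mem_filter, Finset.mem_univ, true_and]
    exact ⟨le_refl ρ, by nlinarith [hpow1 j]⟩
  have hmono : ∀ j, A j ⊆ A (j + 1) := by
    intro j u hu
    rw [hA, Finset.mem_filter] at hu ⊢
    refine ⟨hu.1, hu.2.1, ?_⟩
    have h1 : (1 + η') ^ j ≤ (1 + η') ^ (j + 1) :=
      pow_le_pow_right₀ (by linarith) (Nat.le_succ j)
    have h2 : 0 ≤ outdeg o u := my_outdeg_nonneg ho u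
    nlinarith [hu.2.2]
  have hcard : ∀ j, ((A j).card : ℝ) ≤ (Fintype.card V : ℝ) := by
    intro j
    have := Finset.card_filter_le Finset.univ
      (fun u => outdeg ostar u ≤ ρ ∧ outdeg o v ≤ outdeg o u * (1 + η') ^ j)
    rw [Finset.card_univ] at this
    exact_mod_cast this
  have hcard1 : ∀ j, (1:ℝ) ≤ ((A j).card : ℝ) := by
    intro j
    have : 0 < (A j).card := Finset.card_pos.mpr ⟨v, hvA j⟩
    exact_mod_cast this
  have hstepineq : ∀ j, ((A j).card : ℝ) * (outdeg o v / (1 + η') ^ j)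
      ≤ ρ * ((A (j + 1)).card : ℝ) := by
    intro j
    have H : ∀ u ∈ A j, ∀ x, x ∉ A j → 0 < o u x → 0 < ostar x u → x ∈ A (j + 1) := by
      intro u hu x _ hpo hps
      rw [hA, Finset.mem_filter] at hu ⊢
      refine ⟨Finset.mem_univ x, le_trans (hfair x u hps) hu.2.1, ?_⟩
      have h1 : outdeg o u ≤ (1 + η') * outdeg o x := hfair' u x hpo
      have h2 := hu.2.2
      have h3 : (1 + η') ^ (j + 1) = (1 + η') ^ j * (1 + η') := pow_succ _ _
      have h4 : outdeg o u * (1 + η') ^ j ≤ ((1 + η') * outdeg o x) * (1 + η') ^ j :=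
        mul_le_mul_of_nonneg_right h1 (le_of_lt (hpow j))
      calc outdeg o v ≤ ((1 + η') * outdeg o x) * (1 + η') ^ j := le_trans h2 h4
        _ = outdeg o x * (1 + η') ^ (j + 1) := by rw [h3]; ring
    have M := my_master ho hostar (A j) (A (j + 1)) H
    have lhs : ((A j).card : ℝ) * (outdeg o v / (1 + η') ^ j - ρ)
        ≤ ∑ u ∈ A j, (outdeg o u - outdeg ostar u) := by
      rw [← nsmul_eq_mul]
      apply Finset.card_nsmul_le_sum
      intro u hu
      rw [hA, Finset.mem_filter] at hu
      have h1 : outdeg o v / (1 + η') ^ j ≤ outdeg o u :=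
        (div_le_iff₀ (hpow j)).mpr hu.2.2
      linarith [hu.2.1]
    have rhs : ∑ x ∈ A (j + 1) \ A j, outdeg ostar x
        ≤ ρ * (((A (j + 1)).card : ℝ) - ((A j).card : ℝ)) := by
      have hb : ∀ x ∈ A (j + 1) \ A j, outdeg ostar x ≤ ρ := by
        intro x hx
        rw [Finset.mem_sdiff, hA, Finset.mem_filter] at hx
        exact hx.1.2.1
      have := Finset.sum_le_card_nsmul _ _ ρ hb
      rw [nsmul_eq_mul] at this
      have hcs : ((A (j + 1) \ A j).card : ℝ)
          = ((A (j + 1)).card : ℝ) - ((A j).card : ℝ) := by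
        rw [Finset.card_sdiff_of_subset (hmono j)]
        have := Finset.card_le_card (hmono j)
        push_cast [Nat.cast_sub this]
        ring
      rw [hcs] at this
      linarith
    linarith
  rcases eq_or_lt_of_le hρ0 with h0 | hρpos
  · have h1 := hstepineq 0
    rw [← h0] at h1
    simp only [pow_zero, div_one, zero_mul] at h1
    nlinarith [hcard1 0]
  · have hstep : ∀ j < K, (1 + ε / 4) * ((A j).card : ℝ) ≤ ((A (j + 1)).card : ℝ) := by
      intro j hj
      have h1 := hstepineq j
      have htj : (1 + ε / 2) * ρ ≤ outdeg o v / (1 + η') ^ j := by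
        rw [le_div_iff₀ (hpow j)]
        have hf := hF1 j (le_of_lt hj)
        calc (1 + ε / 2) * ρ * (1 + η') ^ j
            ≤ (1 + ε / 2) * ρ * ((1 + ε) / (1 + ε / 2)) := by
              apply mul_le_mul_of_nonneg_left hf (by positivity)
          _ = (1 + ε) * ρ := by field_simp
          _ ≤ outdeg o v := le_of_lt hcon
      have hcardj : (0:ℝ) ≤ ((A j).card : ℝ) := Nat.cast_nonneg _
      have h2 : ρ * ((1 + ε / 2) * ((A j).card : ℝ)) ≤ ρ * ((A (j + 1)).card : ℝ) := by
        calc ρ * ((1 + ε / 2) * ((A j).card : ℝ))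
            = ((A j).card : ℝ) * ((1 + ε / 2) * ρ) := by ring
          _ ≤ ((A j).card : ℝ) * (outdeg o v / (1 + η') ^ j) :=
              mul_le_mul_of_nonneg_left htj hcardj
          _ ≤ ρ * ((A (j + 1)).card : ℝ) := h1
      have h3 : (1 + ε / 2) * ((A j).card : ℝ) ≤ ((A (j + 1)).card : ℝ) :=
        (mul_le_mul_iff_right₀ hρpos).mp h2
      nlinarith
    exact my_chain_absurd (ε / 4) (Fintype.card V : ℝ) (by positivity)
      (fun j => ((A j).card : ℝ)) K (hcard1 0) hstep hcard hF2

lemma my_lower {ostar o : V → V → ℝ}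
    (hostar : IsOrientation G w ostar) (ho : IsOrientation G w o)
    (hfair : LocallyFair ostar) {ε η' : ℝ} (hε : 0 < ε) (hε1 : ε ≤ 1) (hη'0 : 0 ≤ η')
    (hfair' : EtaFair η' o) (K : ℕ)
    (hF1 : ∀ j ≤ K, (1 + η') ^ j ≤ (1 + ε) / (1 + ε / 2))
    (hF2 : (Fintype.card V : ℝ) < (1 + ε / 4) ^ K)
    (v : V) : (1 + ε)⁻¹ * outdeg ostar v ≤ outdeg o v := by
  by_contra hcon
  push_neg at hcon
  set ρ := outdeg ostar v with hρdef
  have hgv0 : 0 ≤ outdeg o v := my_outdeg_nonneg ho v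
  have hεp : (0:ℝ) < 1 + ε := by linarith
  have hρgv : (1 + ε) * outdeg o v < ρ := by
    have := mul_lt_mul_of_pos_left hcon hεp
    rwa [← mul_assoc, mul_inv_cancel₀ (ne_of_gt hεp), one_mul] at this
  have hρpos : 0 < ρ := lt_of_le_of_lt (by nlinarith) hρgv
  set A : ℕ → Finset V := fun j => Finset.univ.filter
      (fun u => ρ ≤ outdeg ostar u ∧ outdeg o u ≤ outdeg o v * (1 + η') ^ j) with hA
  have hpow : ∀ j : ℕ, (0:ℝ) < (1 + η') ^ j := fun j => pow_pos (by linarith) j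
  have hpow1 : ∀ j : ℕ, (1:ℝ) ≤ (1 + η') ^ j :=
    fun j => one_le_pow₀ (by linarith)
  have hvA : ∀ j, v ∈ A j := by
    intro j
    rw [hA]
    simp only [Finset.mem_filter, Finset.mem_univ, true_and]
    exact ⟨le_refl ρ, by nlinarith [hpow1 j]⟩
  have hmono : ∀ j, A j ⊆ A (j + 1) := by
    intro j u hu
    rw [hA, Finset.mem_filter] at hu ⊢
    refine ⟨hu.1, hu.2.1, ?_⟩
    have h1 : (1 + η') ^ j ≤ (1 + η') ^ (j + 1) :=
      pow_le_pow_right₀ (by linarith) (Nat.le_succ j)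
    nlinarith [hu.2.2]
  have hcard : ∀ j, ((A j).card : ℝ) ≤ (Fintype.card V : ℝ) := by
    intro j
    have := Finset.card_filter_le Finset.univ
      (fun u => ρ ≤ outdeg ostar u ∧ outdeg o u ≤ outdeg o v * (1 + η') ^ j)
    rw [Finset.card_univ] at this
    exact_mod_cast this
  have hcard1 : ∀ j, (1:ℝ) ≤ ((A j).card : ℝ) := by
    intro j
    have : 0 < (A j).card := Finset.card_pos.mpr ⟨v, hvA j⟩
    exact_mod_cast this
  have hstepineq : ∀ j, ((A j).card : ℝ) * (ρ - outdeg o v * (1 + η') ^ j)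
      ≤ (outdeg o v * (1 + η') ^ (j + 1))
        * (((A (j + 1)).card : ℝ) - ((A j).card : ℝ)) := by
    intro j
    have H : ∀ u ∈ A j, ∀ x, x ∉ A j → 0 < ostar u x → 0 < o x u → x ∈ A (j + 1) := by
      intro u hu x _ hps hpo
      rw [hA, Finset.mem_filter] at hu ⊢
      refine ⟨Finset.mem_univ x, le_trans hu.2.1 (hfair u x hps), ?_⟩
      have h1 : outdeg o x ≤ (1 + η') * outdeg o u := hfair' x u hpo
      have h2 := hu.2.2
      have h3 : (1 + η') ^ (j + 1) = (1 + η') ^ j * (1 + η') := pow_succ _ _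
      have h4 : (1 + η') * outdeg o u ≤ (1 + η') * (outdeg o v * (1 + η') ^ j) :=
        mul_le_mul_of_nonneg_left h2 (by linarith)
      calc outdeg o x ≤ (1 + η') * (outdeg o v * (1 + η') ^ j) := le_trans h1 h4
        _ = outdeg o v * (1 + η') ^ (j + 1) := by rw [h3]; ring
    have M := my_master hostar ho (A j) (A (j + 1)) H
    have lhs : ((A j).card : ℝ) * (ρ - outdeg o v * (1 + η') ^ j)
        ≤ ∑ u ∈ A j, (outdeg ostar u - outdeg o u) := by
      rw [← nsmul_eq_mul]
      apply Finset.card_nsmul_le_sum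
      intro u hu
      rw [hA, Finset.mem_filter] at hu
      linarith [hu.2.1, hu.2.2]
    have rhs : ∑ x ∈ A (j + 1) \ A j, outdeg o x
        ≤ (outdeg o v * (1 + η') ^ (j + 1))
          * (((A (j + 1)).card : ℝ) - ((A j).card : ℝ)) := by
      have hb : ∀ x ∈ A (j + 1) \ A j, outdeg o x ≤ outdeg o v * (1 + η') ^ (j + 1) := by
        intro x hx
        rw [Finset.mem_sdiff, hA, Finset.mem_filter] at hx
        exact hx.1.2.2
      have := Finset.sum_le_card_nsmul _ _ _ hb
      rw [nsmul_eq_mul] at this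
      have hcs : ((A (j + 1) \ A j).card : ℝ)
          = ((A (j + 1)).card : ℝ) - ((A j).card : ℝ) := by
        rw [Finset.card_sdiff_of_subset (hmono j)]
        have := Finset.card_le_card (hmono j)
        push_cast [Nat.cast_sub this]
        ring
      rw [hcs] at this
      linarith
    linarith
  rcases eq_or_lt_of_le hgv0 with h0 | hgvpos
  · have h1 := hstepineq 0
    rw [← h0] at h1
    simp only [zero_mul, mul_zero] at h1
    nlinarith [hcard1 0]
  · have hstep : ∀ j < K, (1 + ε / 4) * ((A j).card : ℝ) ≤ ((A (j + 1)).card : ℝ) := by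
      intro j hj
      have h1 := hstepineq j
      set sj := outdeg o v * (1 + η') ^ j with hsjdef
      set sj1 := outdeg o v * (1 + η') ^ (j + 1) with hsj1def
      have hsj1pos : 0 < sj1 := by
        rw [hsj1def]; exact mul_pos hgvpos (hpow (j + 1))
      have hsjb : sj * (1 + ε / 2) ≤ (1 + ε) * outdeg o v := by
        have hf := hF1 j (le_of_lt hj)
        have h2 : (1 + η') ^ j * (1 + ε / 2) ≤ (1 + ε) := by
          have := mul_le_mul_of_nonneg_right hf (show (0:ℝ) ≤ 1 + ε / 2 by linarith)
          rwa [div_mul_cancel₀] at this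
          positivity
        rw [hsjdef]
        calc outdeg o v * (1 + η') ^ j * (1 + ε / 2)
            = outdeg o v * ((1 + η') ^ j * (1 + ε / 2)) := by ring
          _ ≤ outdeg o v * (1 + ε) := mul_le_mul_of_nonneg_left h2 hgv0
          _ = (1 + ε) * outdeg o v := by ring
      have hsj1b : sj1 * (1 + ε / 2) ≤ (1 + ε) * outdeg o v := by
        have hf := hF1 (j + 1) hj
        have h2 : (1 + η') ^ (j + 1) * (1 + ε / 2) ≤ (1 + ε) := by
          have := mul_le_mul_of_nonneg_right hf (show (0:ℝ) ≤ 1 + ε / 2 by linarith)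
          rwa [div_mul_cancel₀] at this
          positivity
        rw [hsj1def]
        calc outdeg o v * (1 + η') ^ (j + 1) * (1 + ε / 2)
            = outdeg o v * ((1 + η') ^ (j + 1) * (1 + ε / 2)) := by ring
          _ ≤ outdeg o v * (1 + ε) := mul_le_mul_of_nonneg_left h2 hgv0
          _ = (1 + ε) * outdeg o v := by ring
      have hgap : (ε / 4) * sj1 ≤ ρ - sj := by
        nlinarith
      have hcardj : (0:ℝ) ≤ ((A j).card : ℝ) := Nat.cast_nonneg _
      have t1 : sj1 * ((ε / 4) * ((A j).card : ℝ))
          ≤ sj1 * (((A (j + 1)).card : ℝ) - ((A j).card : ℝ)) := by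
        calc sj1 * ((ε / 4) * ((A j).card : ℝ))
            = ((A j).card : ℝ) * ((ε / 4) * sj1) := by ring
          _ ≤ ((A j).card : ℝ) * (ρ - sj) := mul_le_mul_of_nonneg_left hgap hcardj
          _ ≤ sj1 * (((A (j + 1)).card : ℝ) - ((A j).card : ℝ)) := h1
      have t2 : (ε / 4) * ((A j).card : ℝ)
          ≤ ((A (j + 1)).card : ℝ) - ((A j).card : ℝ) :=
        (mul_le_mul_iff_right₀ hsj1pos).mp t1
      linarith
    exact my_chain_absurd (ε / 4) (Fintype.card V : ℝ) (by positivity)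
      (fun j => ((A j).card : ℝ)) K (hcard1 0) hstep hcard hF2


end MyAux

/-- in an `η`-fair fractional orientation with `η ≤ ε²/(128 log n)`,
every out-degree is a `(1+ε)`-approximation of the local out-degree `g*(v)`
(the out-degree in any locally fair orientation). -/
theorem eta_fair_approximates_local_outdeg [Fintype V]
    (G : SimpleGraph V) (w : V → V → ℝ)
    (hwpos : ∀ u v, G.Adj u v → 0 < w u v) (hwsymm : ∀ u v, w u v = w v u)
    (n : ℕ) (hn : Fintype.card V = n)
    (hbound : ∀ o' : V → V → ℝ, IsOrientation G w o' → ∀ u, outdeg o' u ≤ n)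
    (ε η : ℝ) (hε : 0 < ε) (hε1 : ε ≤ 1) (hη : η ≤ ε ^ 2 / (128 * Real.log n))
    (ostar : V → V → ℝ) (hostar : IsOrientation G w ostar) (hfair : LocallyFair ostar)
    (o : V → V → ℝ) (ho : IsOrientation G w o) (hetafair : EtaFair η o) :
    ∀ v : V, (1 + ε)⁻¹ * outdeg ostar v ≤ outdeg o v ∧
      outdeg o v ≤ (1 + ε) * outdeg ostar v := by
  classical
  intro v
  have hnV : Nonempty V := ⟨v⟩
  have hn1 : 1 ≤ n := by rw [← hn]; exact Fintype.card_pos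
  set η' := max η 0 with hη'def
  have hη'0 : 0 ≤ η' := le_max_right η 0
  have hfair' : EtaFair η' o := by
    intro u x hpos
    have h1 := hetafair u x hpos
    have h2 : 0 ≤ outdeg o x := my_outdeg_nonneg ho x
    have h3 : η ≤ η' := le_max_left η 0
    nlinarith
  have hL0 : 0 ≤ Real.log (n:ℝ) := Real.log_nonneg (by exact_mod_cast hn1)
  have hL2 : 0 < Real.log (n:ℝ) → Real.log 2 ≤ Real.log (n:ℝ) := by
    intro hpos
    have hn2 : (2:ℝ) ≤ (n:ℝ) := by
      by_contra hc
      push_neg at hc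
      have hn2' : n < 2 := by exact_mod_cast hc
      have hn1' : (n:ℝ) ≤ 1 := by
        have : n ≤ 1 := by omega
        exact_mod_cast this
      have := Real.log_nonpos (by positivity) hn1'
      linarith
    exact Real.log_le_log (by norm_num) hn2
  set K := ⌈6 * Real.log (n:ℝ) / ε⌉₊ + 1 with hK
  have hKη : ((K:ℕ):ℝ) * η' ≤ ε / 4 := by
    rw [hK, hη'def]
    exact my_Keta ε η (Real.log (n:ℝ)) hε hε1 hL0 hL2 hη
  have hF1 := my_F1 ε η' hε hε1 hη'0 K hKη
  have hKbig : 6 * Real.log (n:ℝ) / ε + 1 ≤ (K:ℝ) := by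
    have := Nat.le_ceil (6 * Real.log (n:ℝ) / ε)
    rw [hK]
    push_cast
    linarith
  have hF2 := my_F2 ε hε hε1 n hn1 K hKbig
  have hF2' : (Fintype.card V : ℝ) < (1 + ε / 4) ^ K := by rw [hn]; exact hF2
  exact ⟨my_lower hostar ho hfair hε hε1 hη'0 hfair' K hF1 hF2' v,
         my_upper hostar ho hfair hε hε1 hη'0 hfair' K hF1 hF2' v⟩
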